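/- Let N ≥ 2 and 1 ≤ m ≤ N be integers. Then (a) for every real ρ with −1/(N−1) ≤ ρ ≤ 0 one has ψ(N,m,ρ) ≤ m = ψ(N,m,0); and consequently (b) the supremum of ψ(N,m,ρ) over ρ ∈ [−1/(N−1), 1) equals the supremum of ψ(N,m,ρ) over ρ ∈ [0, 1). -/

import Mathlib

noncomputable section

/-- The cut-set quantity ψ(N,n,ρ) of Niesen–Diggavi. -/
def psi (N n : ℕ) (ρ : ℝ) : ℝ :=
  (n : ℝ) * (1 + ((n : ℝ) - 1) * ρ
    - (n : ℝ) * ((N : ℝ) - (n : ℝ)) * ρ ^ 2 / (1 + ((N : ℝ) - (n : ℝ) - 1) * ρ))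

theorem stmt_11 (N m : ℕ) (hN : 2 ≤ N) (hm1 : 1 ≤ m) (hm2 : m ≤ N) :
    (∀ ρ : ℝ, -1 / ((N : ℝ) - 1) ≤ ρ → ρ ≤ 0 → psi N m ρ ≤ (m : ℝ)) ∧
    psi N m 0 = (m : ℝ) ∧
    sSup (psi N m '' Set.Ico (-1 / ((N : ℝ) - 1)) 1)
      = sSup (psi N m '' Set.Ico (0 : ℝ) 1) := by
  have hN' : (2:ℝ) ≤ (N:ℝ) := by exact_mod_cast hN
  have hNpos : (0:ℝ) < (N:ℝ) - 1 := by linarith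
  have hm1' : (1:ℝ) ≤ (m:ℝ) := by exact_mod_cast hm1
  have hm0 : (0:ℝ) ≤ (m:ℝ) := by linarith
  have hmN : (m:ℝ) ≤ (N:ℝ) := by exact_mod_cast hm2
  -- part (a)
  have key : ∀ ρ : ℝ, -1 / ((N : ℝ) - 1) ≤ ρ → ρ ≤ 0 → psi N m ρ ≤ (m : ℝ) := by
    intro ρ h1 h2
    unfold psi
    rcases eq_or_lt_of_le hmN with heq | hlt
    · rw [← heq]
      simp only [sub_self, mul_zero, zero_mul, zero_div, sub_zero]
      nlinarith [mul_nonpos_of_nonneg_of_nonpos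
        (mul_nonneg hm0 (by linarith : (0:ℝ) ≤ (m:ℝ) - 1)) h2]
    · have hmN' : m < N := by exact_mod_cast hlt
      have hc : (0:ℝ) ≤ (N:ℝ) - (m:ℝ) - 1 := by
        have : (m:ℝ) + 1 ≤ (N:ℝ) := by exact_mod_cast hmN'
        linarith
      have hρN : -1 ≤ ρ * ((N:ℝ) - 1) := by
        have := (div_le_iff₀ hNpos).mp h1
        linarith
      have hD : 0 < 1 + ((N:ℝ) - (m:ℝ) - 1) * ρ := by
        nlinarith [mul_nonneg hc (by linarith : (0:ℝ) ≤ ρ * ((N:ℝ) - 1) + 1)]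
      have ht : 0 ≤ (m:ℝ) * ((N:ℝ) - (m:ℝ)) * ρ ^ 2 / (1 + ((N:ℝ) - (m:ℝ) - 1) * ρ) := by
        apply div_nonneg _ hD.le
        have : (0:ℝ) ≤ (N:ℝ) - (m:ℝ) := by linarith
        positivity
      have hρm : ((m:ℝ) - 1) * ρ ≤ 0 :=
        mul_nonpos_of_nonneg_of_nonpos (by linarith) h2
      nlinarith [mul_nonneg hm0 ht, mul_nonpos_of_nonneg_of_nonpos hm0 hρm]
  have hzero : psi N m 0 = (m : ℝ) := by unfold psi; simp
  -- upper bound m^2 on the whole interval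
  have bound : ∀ ρ ∈ Set.Ico (-1 / ((N : ℝ) - 1)) 1, psi N m ρ ≤ (m:ℝ)^2 := by
    intro ρ hρ
    rcases le_or_gt ρ 0 with h0 | h0
    · have := key ρ hρ.1 h0
      nlinarith
    · have hρ1 : ρ < 1 := hρ.2
      unfold psi
      rcases eq_or_lt_of_le hmN with heq | hlt
      · rw [← heq]
        simp only [sub_self, mul_zero, zero_mul, zero_div, sub_zero]
        nlinarith [mul_nonneg (mul_nonneg hm0 (by linarith : (0:ℝ) ≤ (m:ℝ) - 1))
          (by linarith : (0:ℝ) ≤ 1 - ρ)]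
      · have hmN' : m < N := by exact_mod_cast hlt
        have hc : (0:ℝ) ≤ (N:ℝ) - (m:ℝ) - 1 := by
          have : (m:ℝ) + 1 ≤ (N:ℝ) := by exact_mod_cast hmN'
          linarith
        have hD : 0 < 1 + ((N:ℝ) - (m:ℝ) - 1) * ρ := by nlinarith
        have ht : 0 ≤ (m:ℝ) * ((N:ℝ) - (m:ℝ)) * ρ ^ 2 / (1 + ((N:ℝ) - (m:ℝ) - 1) * ρ) := by
          apply div_nonneg _ hD.le
          have : (0:ℝ) ≤ (N:ℝ) - (m:ℝ) := by linarith
          positivity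
        nlinarith [mul_nonneg hm0 ht,
          mul_nonneg (mul_nonneg hm0 (by linarith : (0:ℝ) ≤ (m:ℝ) - 1))
            (by linarith : (0:ℝ) ≤ 1 - ρ)]
  have ha0 : -1 / ((N : ℝ) - 1) ≤ 0 := by
    apply div_nonpos_of_nonpos_of_nonneg <;> linarith
  have hsub : psi N m '' Set.Ico (0:ℝ) 1 ⊆ psi N m '' Set.Ico (-1 / ((N : ℝ) - 1)) 1 :=
    Set.image_mono (Set.Ico_subset_Ico ha0 le_rfl)
  have hbdd1 : BddAbove (psi N m '' Set.Ico (-1 / ((N : ℝ) - 1)) 1) := by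
    refine ⟨(m:ℝ)^2, ?_⟩
    rintro x ⟨ρ, hρ, rfl⟩
    exact bound ρ hρ
  have hbdd2 : BddAbove (psi N m '' Set.Ico (0:ℝ) 1) := hbdd1.mono hsub
  have h0mem : (0:ℝ) ∈ Set.Ico (0:ℝ) 1 := ⟨le_rfl, zero_lt_one⟩
  have hne2 : (psi N m '' Set.Ico (0:ℝ) 1).Nonempty :=
    ⟨psi N m 0, Set.mem_image_of_mem _ h0mem⟩
  refine ⟨key, hzero, le_antisymm ?_ (csSup_le_csSup hbdd1 hne2 hsub)⟩
  apply csSup_le (hne2.mono hsub)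
  rintro x ⟨ρ, hρ, rfl⟩
  rcases le_or_gt 0 ρ with h0 | h0
  · exact le_csSup hbdd2 ⟨ρ, ⟨h0, hρ.2⟩, rfl⟩
  · calc psi N m ρ ≤ (m:ℝ) := key ρ hρ.1 h0.le
      _ = psi N m 0 := hzero.symm
      _ ≤ _ := le_csSup hbdd2 (Set.mem_image_of_mem _ h0mem)
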